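/- Fix a nonzero real number λ and integers m ≥ 0, r ≥ 0. In ℝ[[x]], the following identity holds: Σ_{k=0}^{m} {m+r brace k+r}_{r,λ} k! x^k (1−x)^{−(k+1)} = Σ_{n=0}^{∞} (n+r)_{m,λ} x^n; equivalently, (1/(1−x)) · F^{(r)}_{m,λ}(x/(1−x)) = Σ_{n=0}^{∞} (n+r)_{m,λ} x^n, where F^{(r)}_{m,λ}(x/(1−x)) denotes the result of substituting the formal power series x(1−x)^{−1} into the polynomial F^{(r)}_{m,λ}. -/

import Mathlib

open Finset PowerSeries

noncomputable section

/-- The degenerate falling factorial `(x)_{n,λ} = x(x-λ)⋯(x-(n-1)λ)`. -/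
def dff (lam x : ℝ) (n : ℕ) : ℝ := ∏ i ∈ Finset.range n, (x - i * lam)

/-- The ordinary falling factorial `(x)_n = x(x-1)⋯(x-n+1)`. -/
def ff (x : ℝ) (n : ℕ) : ℝ := ∏ i ∈ Finset.range n, (x - i)

lemma ff_nat_eq_descFactorial (n k : ℕ) : ff (n : ℝ) k = (n.descFactorial k : ℝ) := by
  induction k with
  | zero => simp [ff]
  | succ k ih =>
    rw [ff, Finset.prod_range_succ, ← ff, ih, Nat.descFactorial_succ, Nat.cast_mul]
    rcases lt_or_ge k n with h | h
    · rw [Nat.cast_sub h.le]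
      ring
    · rcases eq_or_lt_of_le h with rfl | h'
      · simp
      · rw [Nat.descFactorial_eq_zero_iff_lt.mpr h', Nat.cast_zero, zero_mul, mul_zero]

/-- in `ℝ[[x]]`,
`∑_{k=0}^m {m+r brace k+r}_{r,λ} k! x^k (1-x)^{-(k+1)} = ∑_{n=0}^∞ (n+r)_{m,λ} x^n`;
equivalently, `(1/(1-x)) · F^{(r)}_{m,λ}(x/(1-x)) = ∑_{n=0}^∞ (n+r)_{m,λ} x^n`, where
`F^{(r)}_{m,λ}(y) = ∑_{k=0}^m {m+r brace k+r}_{r,λ} k! y^k` and `S n k` denotes the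
degenerate `r`-Stirling number of the second kind `{n+r brace k+r}_{r,λ}`, characterized by
`(x+r)_{n,λ} = ∑_{k=0}^n S n k (x)_k`. -/
theorem statement_6 (lam : ℝ) (hlam : lam ≠ 0) (m r : ℕ)
    (S : ℕ → ℕ → ℝ)
    (hS : ∀ (n : ℕ) (x : ℝ), dff lam (x + r) n = ∑ k ∈ Finset.range (n + 1), S n k * ff x k) :
    (∑ k ∈ Finset.range (m + 1), (S m k * k.factorial) •
        (PowerSeries.X ^ k * ((1 - PowerSeries.X : PowerSeries ℝ)⁻¹) ^ (k + 1)) =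
      PowerSeries.mk fun n => dff lam ((n : ℝ) + r) m) ∧
    ((1 - PowerSeries.X : PowerSeries ℝ)⁻¹ *
        Polynomial.eval₂ (PowerSeries.C (R := ℝ))
          (PowerSeries.X * (1 - PowerSeries.X : PowerSeries ℝ)⁻¹)
          (∑ k ∈ Finset.range (m + 1),
            Polynomial.C (S m k * k.factorial) * Polynomial.X ^ k) =
      PowerSeries.mk fun n => dff lam ((n : ℝ) + r) m) := by
  have hinv : (1 - X : ℝ⟦X⟧)⁻¹ = PowerSeries.mk 1 := by
    rw [PowerSeries.inv_eq_iff_mul_eq_one (by simp)]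
    exact mk_one_mul_one_sub_eq_one ℝ
  have part1 : (∑ k ∈ Finset.range (m + 1), (S m k * k.factorial) •
        (PowerSeries.X ^ k * ((1 - PowerSeries.X : PowerSeries ℝ)⁻¹) ^ (k + 1)) =
      PowerSeries.mk fun n => dff lam ((n : ℝ) + r) m) := by
    ext n
    rw [coeff_mk, map_sum]
    have hterm : ∀ k ∈ Finset.range (m+1),
        (coeff n) ((S m k * k.factorial) • (X ^ k * ((1 - X : ℝ⟦X⟧)⁻¹) ^ (k + 1))) =
        S m k * ff (n : ℝ) k := by
      intro k _
      rw [map_smul, hinv, mk_one_pow_eq_mk_choose_add, coeff_X_pow_mul']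
      by_cases hk : k ≤ n
      · rw [if_pos hk, coeff_mk, Nat.add_sub_cancel' hk, ff_nat_eq_descFactorial,
          Nat.descFactorial_eq_factorial_mul_choose]
        rw [smul_eq_mul]
        push_cast
        ring
      · rw [if_neg hk, smul_zero, ff_nat_eq_descFactorial,
          Nat.descFactorial_eq_zero_iff_lt.mpr (lt_of_not_ge hk)]
        simp
    rw [Finset.sum_congr rfl hterm]
    exact (hS m n).symm
  refine ⟨part1, ?_⟩
  rw [← part1, Polynomial.eval₂_finset_sum, Finset.mul_sum]
  refine Finset.sum_congr rfl fun k _ => ?_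
  rw [Polynomial.eval₂_mul, Polynomial.eval₂_C, Polynomial.eval₂_X_pow, smul_eq_C_mul,
    mul_pow, pow_succ]
  ring
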